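/- For every complex character χ of G, the dimension of M(χ) equals s_q(a+b) if χ = 1_G and equals s_q(a+b−1) if χ ≠ 1_G, where s_q(n) denotes the number of subspaces of (F_q)^n. -/

import Mathlib

open Module

variable (F : Type) [Field F] [Fintype F] (n : ℕ)

noncomputable def Gsub (H : Submodule F (Fin n → F)) :
    Subgroup ((Fin n → F) ≃ₗ[F] (Fin n → F)) where
  carrier := {g | LinearEquiv.det g = 1 ∧ ∀ v ∈ H, g v = v}
  one_mem' := ⟨map_one _, fun v _ => rfl⟩
  mul_mem' := by
    rintro g h ⟨hg1, hg2⟩ ⟨hh1, hh2⟩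
    refine ⟨by rw [map_mul, hg1, hh1, one_mul], fun v hv => ?_⟩
    show g (h v) = v
    rw [hh2 v hv, hg2 v hv]
  inv_mem' := by
    rintro g ⟨hg1, hg2⟩
    refine ⟨by rw [map_inv, hg1, inv_one], fun v hv => ?_⟩
    show g.symm v = v
    conv_lhs => rw [← hg2 v hv]
    exact g.symm_apply_apply v

/-- The `χ`-homogeneous component of the span of the basis vectors indexed by `S`. -/
noncomputable def Mcomp (H : Submodule F (Fin n → F)) (χ : Gsub F n H →* ℂ)
    (S : Set (Submodule F (Fin n → F))) : Submodule ℂ (Submodule F (Fin n → F) → ℂ) where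
  carrier := {v | (∀ y, y ∉ S → v y = 0) ∧
      ∀ g : Gsub F n H, ∀ y : Submodule F (Fin n → F),
        v (Submodule.map (((g⁻¹ : Gsub F n H) : (Fin n → F) ≃ₗ[F] (Fin n → F)) :
            (Fin n → F) →ₗ[F] (Fin n → F)) y) = χ g * v y}
  zero_mem' := ⟨fun _ _ => rfl, fun g y => by simp⟩
  add_mem' := by
    rintro v w ⟨hv1, hv2⟩ ⟨hw1, hw2⟩
    refine ⟨fun y hy => by simp [hv1 y hy, hw1 y hy], fun g y => ?_⟩
    simp only [Pi.add_apply, hv2 g y, hw2 g y]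
    ring
  smul_mem' := by
    rintro c v ⟨hv1, hv2⟩
    refine ⟨fun y hy => by simp [hv1 y hy], fun g y => ?_⟩
    simp only [Pi.smul_apply, hv2 g y, smul_eq_mul]
    ring

/-- `s_q(n)`: the number of subspaces of `(F_q)^n`. -/
noncomputable def numSubspaces (F : Type) [Field F] [Fintype F] (n : ℕ) : ℕ :=
  Nat.card (Submodule F (Fin n → F))

lemma mulShift_ne_one {F : Type} [Field F] [Fintype F] (β : AddChar F ℂ) (hβ : β ≠ 1)
    {a : F} (ha : a ≠ 0) : AddChar.mulShift β a ≠ 1 := by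
  intro h
  apply hβ
  ext x
  have := DFunLike.congr_fun h (a⁻¹ * x)
  simpa [AddChar.mulShift_apply, ← mul_assoc, mul_inv_cancel₀ ha] using this

lemma exists_shift {F : Type} [Field F] [Fintype F] (α β : AddChar F ℂ) (hβ : β ≠ 1) :
    ∃ c : F, ∀ x, α x = β (c * x) := by
  classical
  have hsum : ∑ c : F, ∑ x : F, α x * β (-(c * x)) = (Fintype.card F : ℂ) := by
    rw [Finset.sum_comm]
    have : ∀ x : F, ∑ c : F, α x * β (-(c * x)) =
        if x = 0 then (Fintype.card F : ℂ) else 0 := by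
      intro x
      by_cases hx : x = 0
      · simp [hx]
      · rw [if_neg hx]
        have h0 : ∀ c : F, α x * β (-(c * x)) = α x * (AddChar.mulShift β (-x)) c := by
          intro c; rw [AddChar.mulShift_apply]; ring_nf
        rw [Finset.sum_congr rfl fun c _ => h0 c, ← Finset.mul_sum,
          AddChar.sum_eq_zero_of_ne_one (mulShift_ne_one β hβ (neg_ne_zero.2 hx)), mul_zero]
    rw [Finset.sum_congr rfl fun x _ => this x]
    simp
  have hne : ∃ c : F, ∑ x : F, α x * β (-(c * x)) ≠ 0 := by
    by_contra h
    push_neg at h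
    rw [Finset.sum_congr rfl fun c _ => h c] at hsum
    simp at hsum
    exact (Fintype.card_ne_zero (α := F)) (by exact_mod_cast hsum.symm)
  obtain ⟨c, hc⟩ := hne
  refine ⟨c, fun x => ?_⟩
  set δ : AddChar F ℂ :=
    { toFun := fun x => α x * β (-(c * x))
      map_zero_eq_one' := by simp
      map_add_eq_mul' := by
        intro a b
        rw [AddChar.map_add_eq_mul, mul_add, neg_add, AddChar.map_add_eq_mul]
        ring } with hδdef
  have hδ : δ = 1 := by
    by_contra h
    exact hc (AddChar.sum_eq_zero_of_ne_one h)
  have h1 : α x * β (-(c * x)) = 1 := by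
    have := DFunLike.congr_fun hδ x
    simpa [hδdef, AddChar.one_apply] using this
  have h2 : β (c * x) * β (-(c * x)) = 1 := by
    rw [← AddChar.map_add_eq_mul]; simp
  have hβne : β (-(c * x)) ≠ 0 := by
    intro h0; rw [h0, mul_zero] at h2; exact zero_ne_one h2
  exact mul_right_cancel₀ hβne (h1.trans h2.symm)

lemma exists_phi (F : Type) [Field F] [Fintype F] (m : ℕ)
    (H : Submodule F (Fin (m+1) → F)) (hH : finrank F H = m) :
    ∃ (φ : (Fin (m+1) → F) →ₗ[F] F) (u : Fin (m+1) → F),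
      (∀ v ∈ H, φ v = 0) ∧ (∀ v, φ v = 0 → v ∈ H) ∧ φ u = 1 ∧
      (∀ g : (Fin (m+1) → F) ≃ₗ[F] (Fin (m+1) → F), (∀ v ∈ H, g v = v) →
        LinearMap.det (g : (Fin (m+1) → F) →ₗ[F] (Fin (m+1) → F)) = φ (g u)) := by
  classical
  have hV : finrank F (Fin (m+1) → F) = m + 1 := by simp
  have hne : H ≠ ⊤ := by
    intro h
    rw [h, finrank_top, hV] at hH
    omega
  have hex : ¬ ∀ u, u ∈ H := fun h => hne (Submodule.eq_top_iff'.2 h)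
  push_neg at hex
  obtain ⟨u, hu⟩ := hex
  set bH := Module.finBasisOfFinrankEq F H hH with hbH
  set fH : Fin m → (Fin (m+1) → F) := fun i => (bH i : Fin (m+1) → F) with hfH
  have hli : LinearIndependent F fH :=
    bH.linearIndependent.map' H.subtype (Submodule.ker_subtype H)
  have hspan : Submodule.span F (Set.range fH) = H := by
    have : Set.range fH = H.subtype '' Set.range bH := by
      rw [← Set.range_comp]; rfl
    rw [this, Submodule.span_image, bH.span_eq, Submodule.map_subtype_top]
  have hu' : u ∉ Submodule.span F (Set.range fH) := by rw [hspan]; exact hu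
  have li : LinearIndependent F (Fin.cons u fH) := hli.fin_cons hu'
  let B := basisOfLinearIndependentOfCardEqFinrank li (by simp [hV])
  have hB : ⇑B = Fin.cons u fH := coe_basisOfLinearIndependentOfCardEqFinrank li _
  refine ⟨B.coord 0, u, ?_, ?_, ?_, ?_⟩
  · intro v hv
    rw [← hspan] at hv
    induction hv using Submodule.span_induction with
    | mem x hx =>
      obtain ⟨i, rfl⟩ := hx
      have : fH i = B i.succ := by rw [hB, Fin.cons_succ]
      rw [this, Basis.coord_apply, B.repr_self, Finsupp.single_apply,
        if_neg (by exact (Fin.succ_ne_zero i))]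
    | zero => simp
    | add x y _ _ hx hy => rw [map_add, hx, hy, add_zero]
    | smul c x _ hx => rw [map_smul, hx, smul_zero]
  · intro v hv0
    have hrep := B.sum_repr v
    rw [Fin.sum_univ_succ] at hrep
    have h0 : B.repr v 0 • B 0 = 0 := by
      rw [show B.repr v 0 = 0 from hv0, zero_smul]
    rw [h0, zero_add] at hrep
    rw [← hrep]
    refine Submodule.sum_mem H fun i _ => Submodule.smul_mem H _ ?_
    rw [hB, Fin.cons_succ]
    exact (bH i).2
  · have : u = B 0 := by rw [hB, Fin.cons_zero]
    rw [this, Basis.coord_apply, B.repr_self, Finsupp.single_apply, if_pos rfl]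
  · intro g hg
    rw [← LinearMap.det_toMatrix B]
    have hfix : ∀ i : Fin m, g (B i.succ) = B i.succ := by
      intro i
      apply hg
      rw [hB, Fin.cons_succ]
      exact (bH i).2
    have htri : (LinearMap.toMatrix B B g).BlockTriangular OrderDual.toDual := by
      intro i j hij
      have hij' : i < j := hij
      have hj : j ≠ 0 := Fin.pos_iff_ne_zero.mp (lt_of_le_of_lt (Fin.zero_le i) hij')
      obtain ⟨k, rfl⟩ := Fin.exists_succ_eq.2 hj
      rw [LinearMap.toMatrix_apply, LinearEquiv.coe_coe, hfix k, B.repr_self,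
        Finsupp.single_apply, if_neg (by exact fun h => absurd h (ne_of_gt hij'))]
    rw [Matrix.det_of_lowerTriangular _ htri, Fin.prod_univ_succ]
    have hdiag : ∀ i : Fin m, LinearMap.toMatrix B B g i.succ i.succ = 1 := by
      intro i
      rw [LinearMap.toMatrix_apply, LinearEquiv.coe_coe, hfix i, B.repr_self,
        Finsupp.single_apply, if_pos rfl]
    rw [Finset.prod_congr rfl fun i _ => hdiag i]
    rw [LinearMap.toMatrix_apply, Basis.coord_apply]
    have : B 0 = u := by rw [hB, Fin.cons_zero]
    simp [this]

set_option maxHeartbeats 2000000 in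
theorem main_aux (F : Type) [Field F] [Fintype F] (m : ℕ)
    (H : Submodule F (Fin (m+1) → F)) (hH : finrank F H = m)
    (χ : Gsub F (m+1) H →* ℂ) :
    (χ = 1 → finrank ℂ (Mcomp F (m+1) H χ {y | ¬ y ≤ H}) = numSubspaces F m)
    ∧ (χ ≠ 1 → finrank ℂ (Mcomp F (m+1) H χ {y | ¬ y ≤ H}) = numSubspaces F (m-1)) := by
  classical
  obtain ⟨φ, u, hφH, hker, hφu, hdet⟩ := exists_phi F m H hH
  -- transvections
  let Tl : H → ((Fin (m+1) → F) ≃ₗ[F] (Fin (m+1) → F)) := fun h =>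
    { toLinearMap := LinearMap.id + φ.smulRight (h : Fin (m+1) → F)
      invFun := fun v => v - φ v • (h : Fin (m+1) → F)
      left_inv := by
        intro v
        simp only [LinearMap.add_apply, LinearMap.id_apply, LinearMap.smulRight_apply,
          map_add, map_smul, hφH _ h.2, smul_eq_mul, mul_zero, add_zero]
        abel_nf
        simp [hφH _ h.2]
      right_inv := by
        intro v
        simp only [LinearMap.add_apply, LinearMap.id_apply, LinearMap.smulRight_apply,
          map_sub, map_smul, hφH _ h.2, smul_eq_mul, mul_zero, sub_zero]
        abel_nf
        simp [hφH _ h.2] }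
  have hTl_apply : ∀ (h : H) v, Tl h v = v + φ v • (h : Fin (m+1) → F) := fun h v => rfl
  have hTl_mem : ∀ h : H, Tl h ∈ Gsub F (m+1) H := by
    intro h
    constructor
    · apply Units.ext
      rw [LinearEquiv.coe_det, hdet (Tl h) (fun v hv => by
        rw [hTl_apply, hφH v hv, zero_smul, add_zero])]
      rw [hTl_apply, map_add, map_smul, hφu, hφH _ h.2, smul_eq_mul, mul_zero, add_zero]
      rfl
    · intro v hv
      rw [hTl_apply, hφH v hv, zero_smul, add_zero]
  let T : H → Gsub F (m+1) H := fun h => ⟨Tl h, hTl_mem h⟩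
  have hT_add : ∀ h h' : H, T (h + h') = T h * T h' := by
    intro h h'
    apply Subtype.ext
    apply LinearEquiv.ext
    intro v
    show Tl (h + h') v = Tl h (Tl h' v)
    rw [hTl_apply, hTl_apply, hTl_apply, map_add, map_smul, hφH _ h'.2, smul_eq_mul,
      mul_zero, add_zero]
    rw [Submodule.coe_add, smul_add]
    abel
  have hT_zero : T 0 = 1 := by
    apply Subtype.ext
    apply LinearEquiv.ext
    intro v
    show Tl 0 v = v
    rw [hTl_apply]
    simp
  have hT_inv : ∀ h : H, (T h)⁻¹ = T (-h) := by
    intro h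
    apply inv_eq_of_mul_eq_one_right
    rw [← hT_add, add_neg_cancel, hT_zero]
  have hT_surj : ∀ g : Gsub F (m+1) H, ∃ h : H, T h = g := by
    intro g
    obtain ⟨hg1, hg2⟩ := g.2
    have hdetg : φ ((g : (Fin (m+1) → F) ≃ₗ[F] (Fin (m+1) → F)) u) = 1 := by
      rw [← hdet _ hg2]
      rw [← LinearEquiv.coe_det, hg1]
      rfl
    set gu := (g : (Fin (m+1) → F) ≃ₗ[F] (Fin (m+1) → F)) u with hgu
    have hmem : gu - u ∈ H := by
      apply hker
      rw [map_sub, hdetg, hφu, sub_self]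
    refine ⟨⟨gu - u, hmem⟩, ?_⟩
    apply Subtype.ext
    apply LinearEquiv.ext
    intro v
    show Tl _ v = (g : (Fin (m+1) → F) ≃ₗ[F] (Fin (m+1) → F)) v
    rw [hTl_apply]
    have hvH : v - φ v • u ∈ H := by
      apply hker
      rw [map_sub, map_smul, hφu, smul_eq_mul, mul_one, sub_self]
    have := hg2 _ hvH
    rw [map_sub, map_smul] at this
    have hgv : (g : (Fin (m+1) → F) ≃ₗ[F] (Fin (m+1) → F)) v
        = v - φ v • u + φ v • gu := by
      rw [← this]; abel
    rw [hgv]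
    simp only [smul_sub]
    abel
  -- the character as a function on V
  let ψ : (Fin (m+1) → F) → ℂ := fun v => if hv : v ∈ H then χ (T ⟨v, hv⟩) else 0
  have hψT : ∀ h : H, χ (T h) = ψ (h : Fin (m+1) → F) := by
    intro h
    show _ = dite _ _ _
    rw [dif_pos h.2]
  have hψ_add : ∀ v w : Fin (m+1) → F, v ∈ H → w ∈ H → ψ (v + w) = ψ v * ψ w := by
    intro v w hv hw
    show dite _ _ _ = dite _ _ _ * dite _ _ _
    rw [dif_pos (H.add_mem hv hw), dif_pos hv, dif_pos hw,
      show (⟨v + w, H.add_mem hv hw⟩ : H) = ⟨v, hv⟩ + ⟨w, hw⟩ from rfl, hT_add, map_mul]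
  have hψ_zero : ψ 0 = 1 := by
    show dite _ _ _ = 1
    rw [dif_pos H.zero_mem, show (⟨(0 : Fin (m+1) → F), H.zero_mem⟩ : H) = 0 from rfl,
      hT_zero, map_one]
  have hψ_unit : ∀ v ∈ H, ψ v * ψ (-v) = 1 := by
    intro v hv
    rw [← hψ_add v (-v) hv (H.neg_mem hv), add_neg_cancel, hψ_zero]
  -- the kernel subspace
  let W : Submodule F (Fin (m+1) → F) :=
    { carrier := {v | v ∈ H ∧ ∀ c : F, ψ (c • v) = 1}
      add_mem' := by
        rintro a b ⟨haH, ha⟩ ⟨hbH, hb⟩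
        refine ⟨H.add_mem haH hbH, fun c => ?_⟩
        rw [smul_add, hψ_add _ _ (H.smul_mem c haH) (H.smul_mem c hbH), ha, hb, one_mul]
      zero_mem' := ⟨H.zero_mem, fun c => by rw [smul_zero]; exact hψ_zero⟩
      smul_mem' := by
        rintro c v ⟨hvH, hv⟩
        exact ⟨H.smul_mem c hvH, fun c' => by rw [smul_smul]; exact hv (c' * c)⟩ }
  have hWmem : ∀ v : Fin (m+1) → F, v ∈ W ↔ v ∈ H ∧ ∀ c : F, ψ (c • v) = 1 := fun v => Iff.rfl
  have hWH : W ≤ H := fun v hv => ((hWmem v).1 hv).1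
  have hψW : ∀ v ∈ W, ψ v = 1 := by
    intro v hv
    have := ((hWmem v).1 hv).2 1
    rwa [one_smul] at this
  have hψcong : ∀ v v' : Fin (m+1) → F, v ∈ H → v' ∈ H → v - v' ∈ W → ψ v = ψ v' := by
    intro v v' hv hv' hd
    have : ψ v = ψ (v' + (v - v')) := by rw [add_sub_cancel]
    rw [this, hψ_add _ _ hv' (hWH hd), hψW _ hd, mul_one]
  -- the parametrization of subspaces not contained in H
  let Y : Submodule F (Fin (m+1) → F) → (Fin (m+1) → F) → Submodule F (Fin (m+1) → F) :=
    fun w h => w ⊔ Submodule.span F {u + h}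
  have hY1 : ∀ (w : Submodule F (Fin (m+1) → F)) (h : Fin (m+1) → F), h ∈ H →
      ¬ (Y w h ≤ H) := by
    intro w h hh hle
    have : u + h ∈ Y w h := Submodule.mem_sup_right (Submodule.mem_span_singleton_self _)
    have := hφH _ (hle this)
    rw [map_add, hφu, hφH _ hh, add_zero] at this
    exact one_ne_zero this
  have hY2 : ∀ (w : Submodule F (Fin (m+1) → F)), w ≤ H → ∀ h ∈ H, (Y w h) ⊓ H = w := by
    intro w hw h hh
    apply le_antisymm
    · rintro v ⟨hv1, hv2⟩
      obtain ⟨a, ha, b, hb, rfl⟩ := Submodule.mem_sup.1 hv1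
      obtain ⟨c, rfl⟩ := Submodule.mem_span_singleton.1 hb
      have : φ (a + c • (u + h)) = c := by
        rw [map_add, map_smul, map_add, hφu, hφH _ hh, hφH _ (hw ha), smul_eq_mul]
        ring
      rw [hφH _ hv2] at this
      rw [← this, zero_smul, add_zero]
      exact ha
    · exact le_inf le_sup_left hw
  have hY3 : ∀ y : Submodule F (Fin (m+1) → F), ¬ y ≤ H →
      ∃ h, h ∈ H ∧ y = Y (y ⊓ H) h := by
    intro y hy
    obtain ⟨v, hv, hvH⟩ := SetLike.not_le_iff_exists.1 hy
    have hφv : φ v ≠ 0 := fun h => hvH (hker v h)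
    set v' := (φ v)⁻¹ • v with hv'
    have hv'y : v' ∈ y := y.smul_mem _ hv
    have hφv' : φ v' = 1 := by rw [hv', map_smul, smul_eq_mul, inv_mul_cancel₀ hφv]
    have hhm : v' - u ∈ H := by
      apply hker
      rw [map_sub, hφv', hφu, sub_self]
    refine ⟨v' - u, hhm, ?_⟩
    have huh : u + (v' - u) = v' := by abel
    apply le_antisymm
    · intro z hz
      have hz1 : z - φ z • v' ∈ y ⊓ H := by
        constructor
        · exact y.sub_mem hz (y.smul_mem _ hv'y)
        · apply hker
          rw [map_sub, map_smul, hφv', smul_eq_mul, mul_one, sub_self]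
      have : z = (z - φ z • v') + φ z • v' := by abel
      rw [this]
      apply Submodule.add_mem
      · exact Submodule.mem_sup_left hz1
      · apply Submodule.mem_sup_right
        rw [huh]
        exact Submodule.smul_mem _ _ (Submodule.mem_span_singleton_self _)
    · apply sup_le inf_le_left
      rw [huh]
      exact (Submodule.span_singleton_le_iff_mem _ _).2 hv'y
  have hY4a : ∀ (w : Submodule F (Fin (m+1) → F)) (h h' : Fin (m+1) → F),
      h - h' ∈ w → Y w h = Y w h' := by
    have key : ∀ (w : Submodule F (Fin (m+1) → F)) (h h' : Fin (m+1) → F),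
        h - h' ∈ w → Y w h ≤ Y w h' := by
      intro w h h' hd
      apply sup_le le_sup_left
      rw [Submodule.span_singleton_le_iff_mem]
      have : u + h = (h - h') + (u + h') := by abel
      rw [this]
      exact Submodule.add_mem _ (Submodule.mem_sup_left hd)
        (Submodule.mem_sup_right (Submodule.mem_span_singleton_self _))
    intro w h h' hd
    exact le_antisymm (key w h h' hd) (key w h' h (by rw [← neg_sub]; exact w.neg_mem hd))
  have hY4b : ∀ (w : Submodule F (Fin (m+1) → F)), w ≤ H → ∀ h h' : Fin (m+1) → F,
      h ∈ H → h' ∈ H → Y w h = Y w h' → h - h' ∈ w := by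
    intro w hw h h' hh hh' heq
    have h1 : u + h ∈ Y w h' := by
      rw [← heq]; exact Submodule.mem_sup_right (Submodule.mem_span_singleton_self _)
    have h2 : u + h' ∈ Y w h' :=
      Submodule.mem_sup_right (Submodule.mem_span_singleton_self _)
    have h3 : h - h' ∈ Y w h' := by
      have : h - h' = (u + h) - (u + h') := by abel
      rw [this]
      exact Submodule.sub_mem _ h1 h2
    have := hY2 w hw h' hh'
    rw [← this]
    exact ⟨h3, H.sub_mem hh hh'⟩
  -- action on the parametrization
  have hmapfix : ∀ (hh : H) (y : Submodule F (Fin (m+1) → F)), y ≤ H →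
      Submodule.map ((Tl hh : (Fin (m+1) → F) ≃ₗ[F] (Fin (m+1) → F)) :
        (Fin (m+1) → F) →ₗ[F] (Fin (m+1) → F)) y = y := by
    intro hh y hy
    apply le_antisymm
    · rintro v ⟨z, hz, rfl⟩
      show Tl hh z ∈ y
      rw [hTl_apply, hφH _ (hy hz), zero_smul, add_zero]
      exact hz
    · intro z hz
      refine ⟨z, hz, ?_⟩
      show Tl hh z = z
      rw [hTl_apply, hφH _ (hy hz), zero_smul, add_zero]
  have hmap : ∀ (hh : H) (w : Submodule F (Fin (m+1) → F)), w ≤ H →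
      ∀ h : Fin (m+1) → F, h ∈ H →
      Submodule.map ((Tl hh : (Fin (m+1) → F) ≃ₗ[F] (Fin (m+1) → F)) :
        (Fin (m+1) → F) →ₗ[F] (Fin (m+1) → F)) (Y w h) = Y w (h + (hh : Fin (m+1) → F)) := by
    intro hh w hw h hhH
    show Submodule.map _ (w ⊔ _) = _
    rw [Submodule.map_sup]
    have h1 := hmapfix hh w hw
    rw [h1, Submodule.map_span, Set.image_singleton]
    have : (Tl hh : (Fin (m+1) → F) →ₗ[F] (Fin (m+1) → F)) (u + h)
        = u + (h + (hh : Fin (m+1) → F)) := by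
      show Tl hh (u + h) = _
      rw [hTl_apply, map_add, hφu, hφH _ hhH, add_zero, one_smul]
      abel
    rw [this]
  -- the candidate inverse map
  let Wsub := {w : Submodule F (Fin (m+1) → F) // w ≤ W}
  let Ψfun : (Wsub → ℂ) → (Submodule F (Fin (m+1) → F) → ℂ) := fun f y =>
    if hy : ¬ y ≤ H ∧ y ⊓ H ≤ W then
      ψ (-(hY3 y hy.1).choose) * f ⟨y ⊓ H, hy.2⟩ else 0
  have hΨval0 : ∀ (f : Wsub → ℂ) y, ¬ (¬ y ≤ H ∧ y ⊓ H ≤ W) → Ψfun f y = 0 :=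
    fun f y h => dif_neg h
  have hΨval1 : ∀ (f : Wsub → ℂ) y (h1 : ¬ y ≤ H) (h2 : y ⊓ H ≤ W),
      Ψfun f y = ψ (-(hY3 y h1).choose) * f ⟨y ⊓ H, h2⟩ :=
    fun f y h1 h2 => dif_pos ⟨h1, h2⟩
  -- the equivariance of Ψfun
  have heigen : ∀ (f : Wsub → ℂ) (g : Gsub F (m+1) H) (y : Submodule F (Fin (m+1) → F)),
      Ψfun f (Submodule.map (((g⁻¹ : Gsub F (m+1) H) :
        (Fin (m+1) → F) ≃ₗ[F] (Fin (m+1) → F)) :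
        (Fin (m+1) → F) →ₗ[F] (Fin (m+1) → F)) y) = χ g * Ψfun f y := by
    intro f g y
    obtain ⟨h, rfl⟩ := hT_surj g
    rw [hT_inv h]
    by_cases hyH : y ≤ H
    · rw [show (((T (-h) : Gsub F (m+1) H) : (Fin (m+1) → F) ≃ₗ[F] (Fin (m+1) → F)) :
        (Fin (m+1) → F) →ₗ[F] (Fin (m+1) → F)) = ((Tl (-h) :
        (Fin (m+1) → F) ≃ₗ[F] (Fin (m+1) → F)) :
        (Fin (m+1) → F) →ₗ[F] (Fin (m+1) → F)) from rfl, hmapfix (-h) y hyH]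
      rw [hΨval0 f y (fun hc => hc.1 hyH), mul_zero]
    · obtain ⟨hh₀H, hyY⟩ := (hY3 y hyH).choose_spec
      set h₀ := (hY3 y hyH).choose with hh₀
      have hw : y ⊓ H ≤ H := inf_le_right
      have hmapped : Submodule.map (((T (-h) : Gsub F (m+1) H) :
          (Fin (m+1) → F) ≃ₗ[F] (Fin (m+1) → F)) :
          (Fin (m+1) → F) →ₗ[F] (Fin (m+1) → F)) y = Y (y ⊓ H) (h₀ - (h : Fin (m+1) → F)) := by
        show Submodule.map ((Tl (-h) : (Fin (m+1) → F) ≃ₗ[F] (Fin (m+1) → F)) :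
          (Fin (m+1) → F) →ₗ[F] (Fin (m+1) → F)) y = _
        conv_lhs => rw [hyY]
        rw [hmap (-h) (y ⊓ H) hw h₀ hh₀H]
        rw [show ((-h : H) : Fin (m+1) → F) = -(h : Fin (m+1) → F) from rfl, sub_eq_add_neg]
      rw [hmapped]
      have hy' : ¬ Y (y ⊓ H) (h₀ - (h : Fin (m+1) → F)) ≤ H :=
        hY1 _ _ (H.sub_mem hh₀H h.2)
      have hy'inf : Y (y ⊓ H) (h₀ - (h : Fin (m+1) → F)) ⊓ H = y ⊓ H :=
        hY2 _ hw _ (H.sub_mem hh₀H h.2)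
      by_cases hwW : y ⊓ H ≤ W
      · rw [hΨval1 f _ hy' (le_trans (le_of_eq hy'inf) hwW),
          hΨval1 f y hyH hwW]
        obtain ⟨hh₁H, hy'Y⟩ := (hY3 _ hy').choose_spec
        set h₁ := (hY3 _ hy').choose with hh₁
        -- h₁ ≡ h₀ - h mod (y ⊓ H)
        have hcong : h₁ - (h₀ - (h : Fin (m+1) → F)) ∈ y ⊓ H := by
          apply hY4b _ hw _ _ hh₁H (H.sub_mem hh₀H h.2)
          rw [hy'inf] at hy'Y
          exact hy'Y.symm
        have hψeq : ψ (-h₁) = ψ ((h : Fin (m+1) → F)) * ψ (-h₀) := by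
          have e1 : ψ (-h₁) = ψ (-(h₀ - (h : Fin (m+1) → F))) := by
            apply hψcong _ _ (H.neg_mem hh₁H) (H.neg_mem (H.sub_mem hh₀H h.2))
            have hmem := hwW ((y ⊓ H).neg_mem hcong)
            rw [neg_sub] at hmem
            rw [neg_sub_neg]
            exact hmem
          rw [e1, neg_sub, sub_eq_add_neg, hψ_add _ _ h.2 (H.neg_mem hh₀H)]
        rw [hψeq, hψT h]
        have harg : (⟨Y (y ⊓ H) (h₀ - (h : Fin (m+1) → F)) ⊓ H,
            le_trans (le_of_eq hy'inf) hwW⟩ : Wsub)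
            = ⟨y ⊓ H, hwW⟩ := Subtype.ext hy'inf
        rw [harg]
        ring
      · rw [hΨval0 f _ (fun hc => hwW (le_trans (le_of_eq hy'inf.symm) hc.2)),
          hΨval0 f y (fun hc => hwW hc.2), mul_zero]
  -- membership of Ψfun f in Mcomp
  have hΨmem : ∀ f : Wsub → ℂ, Ψfun f ∈ Mcomp F (m+1) H χ {y | ¬ y ≤ H} := by
    intro f
    exact ⟨fun y hy => hΨval0 f y (fun hc => hy hc.1), heigen f⟩
  -- the two linear maps
  let Φl : Mcomp F (m+1) H χ {y | ¬ y ≤ H} →ₗ[ℂ] (Wsub → ℂ) :=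
    { toFun := fun v w => (v : Submodule F (Fin (m+1) → F) → ℂ) (Y w.1 0)
      map_add' := fun v v' => rfl
      map_smul' := fun c v => rfl }
  let Ψl : (Wsub → ℂ) →ₗ[ℂ] Mcomp F (m+1) H χ {y | ¬ y ≤ H} :=
    { toFun := fun f => ⟨Ψfun f, hΨmem f⟩
      map_add' := by
        intro f g
        apply Subtype.ext
        funext y
        show Ψfun (f + g) y = Ψfun f y + Ψfun g y
        by_cases hy : ¬ y ≤ H ∧ y ⊓ H ≤ W
        · rw [hΨval1 _ y hy.1 hy.2, hΨval1 _ y hy.1 hy.2, hΨval1 _ y hy.1 hy.2]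
          simp [mul_add]
        · rw [hΨval0 _ y hy, hΨval0 _ y hy, hΨval0 _ y hy, add_zero]
      map_smul' := by
        intro c f
        apply Subtype.ext
        funext y
        show Ψfun (c • f) y = c • Ψfun f y
        by_cases hy : ¬ y ≤ H ∧ y ⊓ H ≤ W
        · rw [hΨval1 _ y hy.1 hy.2, hΨval1 _ y hy.1 hy.2]
          simp [smul_eq_mul]
          ring
        · rw [hΨval0 _ y hy, hΨval0 _ y hy, smul_zero] }
  -- Φl ∘ Ψl = id
  have hcomp1 : Φl.comp Ψl = LinearMap.id := by
    apply LinearMap.ext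
    intro f
    funext w
    show Ψfun f (Y w.1 0) = f w
    have hc1 : ¬ Y w.1 0 ≤ H := hY1 w.1 0 H.zero_mem
    have hwH : w.1 ≤ H := le_trans w.2 hWH
    have hinf : Y w.1 0 ⊓ H = w.1 := hY2 w.1 hwH 0 H.zero_mem
    have hc2 : Y w.1 0 ⊓ H ≤ W := le_trans (le_of_eq hinf) w.2
    rw [hΨval1 f _ hc1 hc2]
    obtain ⟨hh₁H, hY⟩ := (hY3 _ hc1).choose_spec
    set h₁ := (hY3 _ hc1).choose with hh₁
    rw [hinf] at hY
    have hmem : h₁ ∈ w.1 := by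
      have := hY4b w.1 hwH h₁ 0 hh₁H H.zero_mem hY.symm
      rwa [sub_zero] at this
    have hone : ψ (-h₁) = 1 := hψW _ (w.2 (w.1.neg_mem hmem))
    have harg : (⟨Y w.1 0 ⊓ H, hc2⟩ : Wsub) = w := Subtype.ext hinf
    rw [hone, harg, one_mul]
  -- Ψl ∘ Φl = id
  have hcomp2 : Ψl.comp Φl = LinearMap.id := by
    apply LinearMap.ext
    intro v
    apply Subtype.ext
    funext y
    set fv : Wsub → ℂ := fun w => (v : Submodule F (Fin (m+1) → F) → ℂ) (Y w.1 0) with hfv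
    show Ψfun fv y = (v : Submodule F (Fin (m+1) → F) → ℂ) y
    obtain ⟨hv1, hv2⟩ := v.2
    by_cases hyH : y ≤ H
    · exact (hΨval0 fv y (fun hc => hc.1 hyH)).trans (hv1 y (fun hs => hs hyH)).symm
    · obtain ⟨hh₀H, hyY⟩ := (hY3 y hyH).choose_spec
      set h₀ := (hY3 y hyH).choose with hh₀def
      have hw : y ⊓ H ≤ H := inf_le_right
      by_cases hwW : y ⊓ H ≤ W
      · refine (hΨval1 fv y hyH hwW).trans ?_
        have hkey := hv2 (T ⟨-h₀, H.neg_mem hh₀H⟩) (Y (y ⊓ H) 0)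
        rw [hT_inv, show -(⟨-h₀, H.neg_mem hh₀H⟩ : H) = ⟨h₀, hh₀H⟩ from
          Subtype.ext (neg_neg h₀)] at hkey
        have hmapped : Submodule.map (((T (⟨h₀, hh₀H⟩ : H) : Gsub F (m+1) H) :
            (Fin (m+1) → F) ≃ₗ[F] (Fin (m+1) → F)) :
            (Fin (m+1) → F) →ₗ[F] (Fin (m+1) → F)) (Y (y ⊓ H) 0) = y := by
          show Submodule.map ((Tl (⟨h₀, hh₀H⟩ : H) :
            (Fin (m+1) → F) ≃ₗ[F] (Fin (m+1) → F)) :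
            (Fin (m+1) → F) →ₗ[F] (Fin (m+1) → F)) (Y (y ⊓ H) 0) = y
          rw [hmap _ (y ⊓ H) hw 0 H.zero_mem]
          rw [show ((⟨h₀, hh₀H⟩ : H) : Fin (m+1) → F) = h₀ from rfl, zero_add]
          exact hyY.symm
        rw [hmapped, hψT] at hkey
        rw [hkey]
      · refine (hΨval0 fv y (fun hc => hwW hc.2)).trans ?_
        obtain ⟨h', hh'w, hh'W⟩ := SetLike.not_le_iff_exists.1 hwW
        have hh'H : h' ∈ H := hw hh'w
        have : ¬ ∀ c : F, ψ (c • h') = 1 := fun hall => hh'W ⟨hh'H, hall⟩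
        push_neg at this
        obtain ⟨c, hc⟩ := this
        set h'' := c • h' with hh''def
        have hh''w : h'' ∈ y ⊓ H := (y ⊓ H).smul_mem c hh'w
        have hh''H : h'' ∈ H := hw hh''w
        have hkey := hv2 (T ⟨h'', hh''H⟩) y
        rw [hT_inv] at hkey
        have hmapped : Submodule.map (((T (-(⟨h'', hh''H⟩ : H)) : Gsub F (m+1) H) :
            (Fin (m+1) → F) ≃ₗ[F] (Fin (m+1) → F)) :
            (Fin (m+1) → F) →ₗ[F] (Fin (m+1) → F)) y = y := by
          show Submodule.map ((Tl (-(⟨h'', hh''H⟩ : H)) :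
            (Fin (m+1) → F) ≃ₗ[F] (Fin (m+1) → F)) :
            (Fin (m+1) → F) →ₗ[F] (Fin (m+1) → F)) y = y
          conv_lhs => rw [hyY]
          rw [hmap _ (y ⊓ H) hw h₀ hh₀H]
          rw [show ((-(⟨h'', hh''H⟩ : H) : H) : Fin (m+1) → F) = -h'' from rfl]
          conv_rhs => rw [hyY]
          apply hY4a
          rw [show h₀ + -h'' - h₀ = -h'' by abel]
          exact (y ⊓ H).neg_mem hh''w
        rw [hmapped, hψT] at hkey
        have hψh'' : ψ h'' ≠ 1 := hc
        have hv0 : (v : Submodule F (Fin (m+1) → F) → ℂ) y = 0 := by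
          have hfac : (ψ h'' - 1) * (v : Submodule F (Fin (m+1) → F) → ℂ) y = 0 := by
            rw [sub_mul, one_mul, ← hkey, sub_self]
          rcases mul_eq_zero.1 hfac with h | h
          · exact absurd (by linear_combination h) hψh''
          · exact h
        rw [hv0]
  -- the linear equivalence and counting
  have hequiv : (Wsub → ℂ) ≃ₗ[ℂ] Mcomp F (m+1) H χ {y | ¬ y ≤ H} :=
    LinearEquiv.ofLinear Ψl Φl hcomp2 hcomp1
  haveI : Finite (Submodule F (Fin (m+1) → F)) :=
    Finite.of_injective (fun s : Submodule F (Fin (m+1) → F) =>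
      (s : Set (Fin (m+1) → F))) SetLike.coe_injective
  haveI : Fintype Wsub := Fintype.ofFinite _
  have hrank1 : finrank ℂ (Mcomp F (m+1) H χ {y | ¬ y ≤ H}) = Fintype.card Wsub := by
    rw [← hequiv.finrank_eq, Module.finrank_pi]
  have hcount : ∀ W' : Submodule F (Fin (m+1) → F), ∀ _ : Fintype {w // w ≤ W'},
      Fintype.card {w : Submodule F (Fin (m+1) → F) // w ≤ W'}
        = numSubspaces F (finrank F W') := by
    intro W' _
    rw [← Nat.card_eq_fintype_card, numSubspaces]
    apply Nat.card_congr
    exact ((Submodule.MapSubtype.orderIso W').symm.toEquiv.trans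
      (Submodule.orderIsoMapComap
        ((Module.finBasis F W').equivFun)).toEquiv)
  constructor
  · intro hχ1
    have hWeq : W = H := by
      apply le_antisymm hWH
      intro v hv
      refine ⟨hv, fun c => ?_⟩
      show dite _ _ _ = 1
      rw [dif_pos (H.smul_mem c hv), hχ1]
      rfl
    rw [hrank1, hcount W inferInstance, hWeq, hH]
  · intro hχ1
    have hχne : ∃ h₁ : Fin (m+1) → F, h₁ ∈ H ∧ ψ h₁ ≠ 1 := by
      by_contra hcon
      push_neg at hcon
      apply hχ1
      apply MonoidHom.ext
      intro g
      obtain ⟨h, rfl⟩ := hT_surj g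
      rw [hψT, hcon _ h.2]
      rfl
    obtain ⟨h₁, hh₁H, hψh₁⟩ := hχne
    have hh₁W : h₁ ∉ W := fun hw => hψh₁ (hψW _ hw)
    have hWlt : W < H := lt_of_le_of_ne hWH (fun hEq => hh₁W (hEq.symm ▸ hh₁H))
    have hh₁0 : h₁ ≠ 0 := fun h0 => hψh₁ (by rw [h0]; exact hψ_zero)
    let β : AddChar F ℂ :=
      { toFun := fun c => ψ (c • h₁)
        map_zero_eq_one' := by show ψ ((0 : F) • h₁) = 1; rw [zero_smul]; exact hψ_zero
        map_add_eq_mul' := by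
          intro p q
          rw [add_smul]
          exact hψ_add _ _ (H.smul_mem p hh₁H) (H.smul_mem q hh₁H) }
    have hβ : β ≠ 1 := by
      intro hcon
      apply hψh₁
      have := DFunLike.congr_fun hcon 1
      rw [AddChar.one_apply] at this
      rw [show ψ h₁ = ψ ((1 : F) • h₁) by rw [one_smul]]
      exact this
    have hle : H ≤ W ⊔ Submodule.span F {h₁} := by
      intro h hh
      let α : AddChar F ℂ :=
        { toFun := fun c => ψ (c • h)
          map_zero_eq_one' := by show ψ ((0 : F) • h) = 1; rw [zero_smul]; exact hψ_zero
          map_add_eq_mul' := by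
            intro p q
            rw [add_smul]
            exact hψ_add _ _ (H.smul_mem p hh) (H.smul_mem q hh) }
      obtain ⟨c, hc⟩ := exists_shift α β hβ
      have hmem : h - c • h₁ ∈ W := by
        refine ⟨H.sub_mem hh (H.smul_mem c hh₁H), fun x => ?_⟩
        rw [smul_sub]
        have e1 : ψ (x • h) = ψ (x • (c • h₁)) := by
          have := hc x
          rw [show β (c * x) = ψ ((c * x) • h₁) from rfl,
            show α x = ψ (x • h) from rfl] at this
          rw [this, mul_comm, mul_smul]
        rw [sub_eq_add_neg, ← smul_neg,
          hψ_add _ _ (H.smul_mem x hh) (H.smul_mem x (H.neg_mem (H.smul_mem c hh₁H))),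
          smul_neg, e1]
        exact hψ_unit _ (H.smul_mem x (H.smul_mem c hh₁H))
      have hdec : h = (h - c • h₁) + c • h₁ := by abel
      rw [hdec]
      exact Submodule.add_mem _ (Submodule.mem_sup_left hmem)
        (Submodule.mem_sup_right (Submodule.smul_mem _ _
          (Submodule.mem_span_singleton_self h₁)))
    have hfrle : m ≤ finrank F W + 1 := by
      have e1 := Submodule.finrank_mono hle
      have e2 := Submodule.finrank_sup_add_finrank_inf_eq W (Submodule.span F {h₁})
      have e3 : finrank F (Submodule.span F {h₁}) = 1 := finrank_span_singleton hh₁0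
      omega
    have hlt : finrank F W < m := by
      have h' := Submodule.finrank_lt_finrank_of_lt hWlt
      omega
    rw [hrank1, hcount W inferInstance, show finrank F W = m - 1 by omega]





/-- the dimension of the homogeneous component `M(χ)` of `ℂP̃₁`
equals `s_q(a+b)` if `χ = 1_G` and `s_q(a+b-1)` otherwise. -/
theorem dim_Mchi (F : Type) [Field F] [Fintype F] (a b : ℕ)
    (x H : Submodule F (Fin (a + b + 1) → F))
    (hx : finrank F x = a) (hH : finrank F H = a + b) (hxH : x ≤ H)
    (χ : Gsub F (a + b + 1) H →* ℂ) :
    (χ = 1 →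
      finrank ℂ (Mcomp F (a + b + 1) H χ {y | ¬ y ≤ H}) = numSubspaces F (a + b))
    ∧ (χ ≠ 1 →
      finrank ℂ (Mcomp F (a + b + 1) H χ {y | ¬ y ≤ H}) = numSubspaces F (a + b - 1)) := by
  exact main_aux F (a + b) H hH χ
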